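/- Fix an FU k and an opponent power vector p_{-k} with nonnegative entries. If the price satisfies λ_k·h_{k,0} < W·G_k(p_{-k})/p_a, then every maximizer of p_k ↦ u_k(p_k, p_{-k}) over [0, p_k^max] is strictly positive; i.e., the best response satisfies p̂_k(p_{-k}) > 0 (positivity of the best response). -/

import Mathlib

open Real Finset

/-- SINR of FU `k`. -/
noncomputable def sinr {K : ℕ} (hff : Fin K → Fin K → ℝ) (h0f N : Fin K → ℝ)
    (p0 : ℝ) (k : Fin K) (p : Fin K → ℝ) : ℝ :=
  hff k k * p k / (N k + h0f k * p0 + ∑ j ∈ Finset.univ.erase k, hff j k * p j)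

/-- Net payoff of FU `k`. -/
noncomputable def payoff {K : ℕ} (W pa p0 : ℝ) (hff : Fin K → Fin K → ℝ)
    (h0f hf0 N lam : Fin K → ℝ) (k : Fin K) (p : Fin K → ℝ) : ℝ :=
  W * Real.log (1 + sinr hff h0f N p0 k p) / (p k + pa) - lam k * hf0 k * p k

/-- `G_k(p_{-k})`. -/
noncomputable def Gk {K : ℕ} (hff : Fin K → Fin K → ℝ) (h0f N : Fin K → ℝ)
    (p0 : ℝ) (k : Fin K) (p : Fin K → ℝ) : ℝ :=
  hff k k / (N k + h0f k * p0 + ∑ j ∈ Finset.univ.erase k, hff j k * p j)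

/-- Positivity of the best response: if `λ_k·h_{k,0} < W·G_k(p_{-k})/p_a` then every
maximizer of `p_k ↦ u_k(p_k, p_{-k})` over `[0, p_k^max]` is strictly positive. -/
theorem bestResponse_pos {K : ℕ} (hK : 1 ≤ K)
    (W pa p0 : ℝ) (hW : 0 < W) (hpa : 0 < pa) (hp0 : 0 ≤ p0)
    (hff : Fin K → Fin K → ℝ) (h0f hf0 N lam pmax : Fin K → ℝ)
    (hhff : ∀ i j, 0 < hff i j) (hh0f : ∀ i, 0 < h0f i) (hhf0 : ∀ i, 0 < hf0 i)
    (hN : ∀ i, 0 < N i) (hlam : ∀ i, 0 ≤ lam i) (hpmax : ∀ i, 0 < pmax i)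
    (k : Fin K) (p : Fin K → ℝ) (hp : ∀ i, i ≠ k → 0 ≤ p i)
    (hprice : lam k * hf0 k < W * Gk hff h0f N p0 k p / pa) :
    ∀ x ∈ Set.Icc (0:ℝ) (pmax k),
      (∀ y ∈ Set.Icc (0:ℝ) (pmax k),
        payoff W pa p0 hff h0f hf0 N lam k (Function.update p k y) ≤
          payoff W pa p0 hff h0f hf0 N lam k (Function.update p k x)) → 0 < x := by

  intro x hx hmax
  by_contra hx0
  have hxe : x = 0 := le_antisymm (not_lt.1 hx0) hx.1
  subst hxe
  -- the denominator of Gk is positive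
  set D := N k + h0f k * p0 + ∑ j ∈ Finset.univ.erase k, hff j k * p j with hD
  have hsum : 0 ≤ ∑ j ∈ Finset.univ.erase k, hff j k * p j :=
    Finset.sum_nonneg fun j hj =>
      mul_nonneg (hhff j k).le (hp j (Finset.ne_of_mem_erase hj))
  have hDpos : 0 < D := by
    have h1 := hN k
    have h2 : 0 ≤ h0f k * p0 := mul_nonneg (hh0f k).le hp0
    nlinarith
  set G := Gk hff h0f N p0 k p with hG
  have hGD : G = hff k k / D := rfl
  have hGpos : 0 < G := div_pos (hhff k k) hDpos
  set c := lam k * hf0 k with hc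
  have hcnn : 0 ≤ c := mul_nonneg (hlam k) (hhf0 k).le
  -- sum with updated power vector is the same
  have hsum_eq : ∀ z : ℝ, ∑ j ∈ Finset.univ.erase k, hff j k * Function.update p k z j
      = ∑ j ∈ Finset.univ.erase k, hff j k * p j := by
    intro z
    refine Finset.sum_congr rfl fun j hj => ?_
    rw [Function.update_of_ne (Finset.ne_of_mem_erase hj)]
  have hpayoff : ∀ z : ℝ, payoff W pa p0 hff h0f hf0 N lam k (Function.update p k z)
      = W * Real.log (1 + G * z) / (z + pa) - c * z := by
    intro z
    unfold payoff sinr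
    rw [hsum_eq z, Function.update_self, hGD, ← hD]
    rw [hc]
    ring_nf
  -- payoff at 0 is 0
  have hpay0 : payoff W pa p0 hff h0f hf0 N lam k (Function.update p k 0) = 0 := by
    rw [hpayoff 0]
    simp
  -- continuity argument to find a small y
  have hcont : ContinuousAt (fun y : ℝ => W * G / ((1 + G * y) * (y + pa))) 0 := by
    apply ContinuousAt.div continuousAt_const (by fun_prop)
    simp
    positivity
  have hval : (fun y : ℝ => W * G / ((1 + G * y) * (y + pa))) 0 = W * G / pa := by simp
  have hev : ∀ᶠ y in nhds (0:ℝ), c < W * G / ((1 + G * y) * (y + pa)) := by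
    apply hcont.eventually (p := fun t => c < t)
    rw [hval]
    exact eventually_gt_nhds hprice
  obtain ⟨δ, hδ, hball⟩ := Metric.eventually_nhds_iff.mp hev
  set y := min (pmax k) (δ / 2) with hy
  have hypos : 0 < y := lt_min (hpmax k) (by linarith)
  have hyle : y ≤ pmax k := min_le_left _ _
  have hydist : dist y 0 < δ := by
    rw [Real.dist_eq, sub_zero, abs_of_pos hypos]
    calc y ≤ δ / 2 := min_le_right _ _
    _ < δ := by linarith
  have hgy : c < W * G / ((1 + G * y) * (y + pa)) := hball hydist
  -- payoff at y is positive
  have h1Gy : 0 < 1 + G * y := by positivity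
  have hlog : G * y / (1 + G * y) ≤ Real.log (1 + G * y) := by
    have := Real.one_sub_inv_le_log_of_pos h1Gy
    have heq : 1 - (1 + G * y)⁻¹ = G * y / (1 + G * y) := by
      field_simp
      ring
    linarith [heq ▸ this]
  have hypa : 0 < y + pa := by linarith
  have hmid : 0 < W * (G * y / (1 + G * y)) / (y + pa) - c * y := by
    have h2 : c * ((1 + G * y) * (y + pa)) < W * G := (lt_div_iff₀ (by positivity)).mp hgy
    have h3 : W * (G * y / (1 + G * y)) / (y + pa) = W * G * y / ((1 + G * y) * (y + pa)) := by
      field_simp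
    rw [sub_pos, h3, lt_div_iff₀ (by positivity)]
    nlinarith [mul_pos h1Gy hypa]
  have hpayy : 0 < payoff W pa p0 hff h0f hf0 N lam k (Function.update p k y) := by
    rw [hpayoff y]
    have hmono : W * (G * y / (1 + G * y)) / (y + pa) ≤ W * Real.log (1 + G * y) / (y + pa) := by
      gcongr
    linarith
  have := hmax y ⟨hypos.le, hyle⟩
  rw [hpay0] at this
  linarith
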